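/- For all n, m ≥ 1, every (n, m)-ruler R satisfies C(|R|, 2) ≥ 2nm − n − m; consequently M₂(n, m) ≥ √(4mn − 2(m + n) + 1/4) + 1/2. -/
import Mathlib


/-- The domain of a partial word (a list over `Option A`, where `none` is the hole):
the set of positions carrying a letter. -/
def PartialWord.domain {A : Type*} (w : List (Option A)) : Finset ℕ :=
  (Finset.range w.length).filter fun i => (w.getD i none).isSome

/-- Two partial words are compatible if they have the same length and agree on the
intersection of their domains. -/
def PartialWord.Compatible {A : Type*} (w v : List (Option A)) : Prop :=
  w.length = v.length ∧
    ∀ i ∈ PartialWord.domain w ∩ PartialWord.domain v, w.getD i none = v.getD i none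

/-- A partial word is unbordered if no nonempty proper prefix is compatible with a
suffix of the same length. -/
def PartialWord.Unbordered {A : Type*} (w : List (Option A)) : Prop :=
  ∀ x y : List (Option A), x <+: w → y <:+ w → x ≠ [] → x.length < w.length →
    x.length = y.length → ¬ PartialWord.Compatible x y

/-- The number of holes of a partial word. -/
def PartialWord.holes {A : Type*} (w : List (Option A)) : ℕ :=
  w.countP fun x => x.isNone

/-- `u` repeated `t` times. -/
def listPow {α : Type*} (u : List α) (t : ℕ) : List α := (List.replicate t u).flatten

/-- A complete sparse ruler of length `n`. -/
def IsCompleteRuler (n : ℕ) (R : Finset ℕ) : Prop :=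
  (∀ x ∈ R, x ≤ n) ∧ 0 ∈ R ∧ n ∈ R ∧ ∀ d ≤ n, ∃ r ∈ R, ∃ s ∈ R, r = s + d

/-- Minimum number of marks of a complete sparse ruler of length `n`. -/
noncomputable def M1 (n : ℕ) : ℕ :=
  sInf {k | ∃ R : Finset ℕ, IsCompleteRuler n R ∧ R.card = k}

/-- Maximum number of holes an unbordered partial word of length `n` over an alphabet
of size `k` can have. -/
noncomputable def HB (k n : ℕ) : ℕ :=
  sSup {h | ∃ w : List (Option (Fin k)),
    w.length = n ∧ PartialWord.Unbordered w ∧ PartialWord.holes w = h}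

/-- The ruler (set of partial sums) given by a difference representation. -/
def rulerOfDiffs (D : List ℕ) : Finset ℕ :=
  ((List.range (D.length + 1)).map fun t => (D.take t).sum).toFinset

/-- The difference representation of the extended Wichmann ruler `w₁(r,s,i,j)`. -/
def wichmannDiffs (r s i j : ℕ) : List ℕ :=
  List.replicate r 1 ++ [r + 1] ++ List.replicate r (2 * r + 1) ++
    List.replicate s (4 * r + 3) ++ List.replicate (r + 1) (2 * r + 2) ++
    List.replicate r 1 ++ List.replicate i (r + 1) ++ [j]

/-- A complete two-dimensional sparse ruler: an `(n,m)`-ruler. -/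
def IsRuler2 (n m : ℕ) (R : Finset (ℕ × ℕ)) : Prop :=
  (∀ p ∈ R, p.1 < n ∧ p.2 < m) ∧
    ∀ x y : ℤ, |x| ≤ (n : ℤ) - 1 → |y| ≤ (m : ℤ) - 1 →
      ∃ p ∈ R, ∃ q ∈ R, (p.1 : ℤ) - (q.1 : ℤ) = x ∧ (p.2 : ℤ) - (q.2 : ℤ) = y

/-- Minimum number of marks of an `(n,m)`-ruler. -/
noncomputable def M2 (n m : ℕ) : ℕ :=
  sInf {k | ∃ R : Finset (ℕ × ℕ), IsRuler2 n m R ∧ R.card = k}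

/-- The domain of an `n` by `m` two-dimensional partial word. -/
def domain2 {A : Type*} (n m : ℕ) (w : ℕ × ℕ → Option A) : Finset (ℕ × ℕ) :=
  (Finset.range n ×ˢ Finset.range m).filter fun p => (w p).isSome

/-- An `n` by `m` two-dimensional partial word is unbordered if its domain is an
`(n,m)`-ruler and every nonzero measurable vector can be measured between two
positions carrying distinct letters. -/
def Unbordered2 {A : Type*} (n m : ℕ) (w : ℕ × ℕ → Option A) : Prop :=
  IsRuler2 n m (domain2 n m w) ∧
    ∀ x y : ℤ, |x| ≤ (n : ℤ) - 1 → |y| ≤ (m : ℤ) - 1 → ¬(x = 0 ∧ y = 0) →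
      ∃ p ∈ domain2 n m w, ∃ q ∈ domain2 n m w,
        (p.1 : ℤ) - (q.1 : ℤ) = x ∧ (p.2 : ℤ) - (q.2 : ℤ) = y ∧ w p ≠ w q

/-- Number of holes of an `n` by `m` two-dimensional partial word. -/
def holes2 {A : Type*} (n m : ℕ) (w : ℕ × ℕ → Option A) : ℕ :=
  n * m - (domain2 n m w).card

/-- Maximum number of holes an unbordered `n` by `m` two-dimensional partial word
over an alphabet of size `k` can have. -/
noncomputable def HB2 (k n m : ℕ) : ℕ :=
  sSup {h | ∃ w : ℕ × ℕ → Option (Fin k), Unbordered2 n m w ∧ holes2 n m w = h}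
/-- For all `n, m ≥ 1`, every `(n,m)`-ruler `R` satisfies
`C(|R|, 2) ≥ 2nm - n - m`; consequently `M₂(n,m) ≥ √(4mn - 2(m+n) + 1/4) + 1/2`. -/
theorem ruler2_lower_bound (n m : ℕ) (hn : 1 ≤ n) (hm : 1 ≤ m) :
    (∀ R : Finset (ℕ × ℕ), IsRuler2 n m R → 2 * n * m - n - m ≤ (R.card).choose 2) ∧
    Real.sqrt (4 * (m : ℝ) * (n : ℝ) - 2 * ((m : ℝ) + (n : ℝ)) + 1 / 4) + 1 / 2 ≤
      (M2 n m : ℝ) := by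
  classical
  have key : ∀ R : Finset (ℕ × ℕ), IsRuler2 n m R →
      4 * n * m - 2 * n - 2 * m ≤ R.card * R.card - R.card := by
    intro R hR
    set T : Finset (ℤ × ℤ) :=
      ((Finset.Icc (-(n : ℤ) + 1) ((n : ℤ) - 1)) ×ˢ
        (Finset.Icc (-(m : ℤ) + 1) ((m : ℤ) - 1))).erase (0, 0) with hT
    have hcardT : T.card = 4 * n * m - 2 * n - 2 * m := by
      rw [hT, Finset.card_erase_of_mem, Finset.card_product, Int.card_Icc, Int.card_Icc]
      · have h1 : ((n : ℤ) - 1 + 1 - (-(n : ℤ) + 1)).toNat = 2 * n - 1 := by omega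
        have h2 : ((m : ℤ) - 1 + 1 - (-(m : ℤ) + 1)).toNat = 2 * m - 1 := by omega
        rw [h1, h2]
        have e1 : (2 * n - 1) * (2 * m - 1) = 4 * (n * m) - 2 * n - 2 * m + 1 := by
          cases' Nat.exists_eq_add_of_le hn with a ha
          cases' Nat.exists_eq_add_of_le hm with b hb
          subst ha hb
          have e2 : (1 + a) * (1 + b) = 1 + a + b + a * b := by ring
          have e3 : (2 * (1 + a) - 1) * (2 * (1 + b) - 1) = (2 * a + 1) * (2 * b + 1) := by
            congr 1 <;> omega
          have e4 : (2 * a + 1) * (2 * b + 1) = 4 * (a * b) + 2 * a + 2 * b + 1 := by ring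
          omega
        have e5 : 4 * n * m = 4 * (n * m) := by ring
        omega
      · rw [Finset.mem_product, Finset.mem_Icc, Finset.mem_Icc]
        constructor <;> constructor <;> omega
    have hPtotal : ∀ v : ℤ × ℤ, v ∈ T → ∃ pq : (ℕ × ℕ) × (ℕ × ℕ), pq ∈ R.offDiag ∧
        (pq.1.1 : ℤ) - pq.2.1 = v.1 ∧ (pq.1.2 : ℤ) - pq.2.2 = v.2 := by
      intro v hv
      rw [hT, Finset.mem_erase, Finset.mem_product, Finset.mem_Icc, Finset.mem_Icc] at hv
      obtain ⟨hv0, ⟨h1a, h1b⟩, h2a, h2b⟩ := hv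
      obtain ⟨p, hp, q, hq, e1, e2⟩ := hR.2 v.1 v.2 (by rw [abs_le]; omega) (by rw [abs_le]; omega)
      refine ⟨(p, q), Finset.mem_offDiag.mpr ⟨hp, hq, ?_⟩, e1, e2⟩
      intro hpq
      simp only at hpq
      subst hpq
      exact hv0 (Prod.ext (by omega) (by omega))
    set f : ℤ × ℤ → (ℕ × ℕ) × (ℕ × ℕ) := fun v =>
      if h : ∃ pq : (ℕ × ℕ) × (ℕ × ℕ), pq ∈ R.offDiag ∧
        (pq.1.1 : ℤ) - pq.2.1 = v.1 ∧ (pq.1.2 : ℤ) - pq.2.2 = v.2 then h.choose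
      else default with hf
    have hspec : ∀ v ∈ T, f v ∈ R.offDiag ∧
        ((f v).1.1 : ℤ) - (f v).2.1 = v.1 ∧ ((f v).1.2 : ℤ) - (f v).2.2 = v.2 := by
      intro v hv
      have h := hPtotal v hv
      rw [hf]; simp only [dif_pos h]
      exact h.choose_spec
    have hle : T.card ≤ R.offDiag.card := by
      apply Finset.card_le_card_of_injOn f (fun v hv => (hspec v hv).1)
      intro v1 h1 v2 h2 heq
      obtain ⟨-, e11, e12⟩ := hspec v1 h1
      obtain ⟨-, e21, e22⟩ := hspec v2 h2
      rw [heq] at e11 e12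
      exact Prod.ext (by omega) (by omega)
    rw [hcardT, Finset.offDiag_card] at hle
    exact hle
  have key2 : ∀ R : Finset (ℕ × ℕ), IsRuler2 n m R →
      2 * n * m - n - m ≤ (R.card).choose 2 := by
    intro R hR
    have h1 := key R hR
    have heven : 2 * ((R.card).choose 2) = R.card * R.card - R.card := by
      rcases hk : R.card with _ | c
      · simp
      · rw [Nat.choose_two_right, Nat.add_sub_cancel, mul_comm (c + 1) c,
          Nat.two_mul_div_two_of_even (Nat.even_mul_succ_self c)]
        have e2 : (c + 1) * (c + 1) = c * (c + 1) + (c + 1) := by ring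
        omega
    have hnm : n + m ≤ 2 * n * m := by nlinarith
    have e1 : 4 * n * m = 2 * (2 * n * m) := by ring
    omega
  refine ⟨key2, ?_⟩
  -- nonempty
  have hgrid : IsRuler2 n m (Finset.range n ×ˢ Finset.range m) := by
    constructor
    · intro p hp
      rw [Finset.mem_product, Finset.mem_range, Finset.mem_range] at hp
      exact hp
    · intro x y hx hy
      rw [abs_le] at hx hy
      refine ⟨(x.toNat, y.toNat), ?_, ((-x).toNat, (-y).toNat), ?_, ?_, ?_⟩
      · simp only [Finset.mem_product, Finset.mem_range]; omega
      · simp only [Finset.mem_product, Finset.mem_range]; omega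
      · simp only []; omega
      · simp only []; omega
  have hne : {k | ∃ R : Finset (ℕ × ℕ), IsRuler2 n m R ∧ R.card = k}.Nonempty :=
    ⟨_, _, hgrid, rfl⟩
  have hmem : M2 n m ∈ {k | ∃ R : Finset (ℕ × ℕ), IsRuler2 n m R ∧ R.card = k} := by
    rw [M2]; exact Nat.sInf_mem hne
  obtain ⟨R, hR, hcard⟩ := hmem
  set c := M2 n m with hc
  have hRne : 1 ≤ c := by
    obtain ⟨p, hp, -⟩ := hR.2 0 0 (by rw [abs_le]; constructor <;> simp <;> omega)
      (by rw [abs_le]; constructor <;> simp <;> omega)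
    rw [← hcard]
    exact Finset.card_pos.mpr ⟨p, hp⟩
  have h1 := key R hR
  rw [hcard] at h1
  -- real inequality
  have hcc : c ≤ c * c := Nat.le_mul_of_pos_left c (by omega)
  have hreal : 4 * (m : ℝ) * n - 2 * ((m : ℝ) + n) ≤ (c : ℝ) * c - c := by
    have hnm : 2 * n + 2 * m ≤ 4 * n * m := by nlinarith
    have : 4 * n * m ≤ c * c - c + 2 * n + 2 * m := by omega
    have hcast : (4 * n * m : ℝ) ≤ (c : ℝ) * c - c + 2 * n + 2 * m := by
      have := Nat.cast_le (α := ℝ) |>.mpr this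
      push_cast [Nat.cast_sub hcc] at this ⊢
      linarith
    linarith
  have hc2 : (1 : ℝ) ≤ c := by exact_mod_cast hRne
  have hA : Real.sqrt (4 * (m : ℝ) * n - 2 * ((m : ℝ) + n) + 1 / 4) ≤ (c : ℝ) - 1 / 2 := by
    rw [show ((c : ℝ) - 1 / 2) = Real.sqrt (((c : ℝ) - 1 / 2) ^ 2) from
      (Real.sqrt_sq (by linarith)).symm]
    apply Real.sqrt_le_sqrt
    nlinarith
  linarith
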